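/- For the four-state deterministic AND model (rows: states 00, 01, 10 map to 00; state 11 maps to 11), EI = 2 − (3/4)·log₂3 ≈ 0.81 bits, which is strictly less than 1 bit, the EI of the two-state coarse-grained model with identity TPM. -/
import Mathlib


open Real Finset

/-- KL divergence (in bits) of a distribution on `Fin N` against the uniform distribution. -/
noncomputable def klU {N : ℕ} (p : Fin N → ℝ) : ℝ :=
  ∑ i, p i * Real.logb 2 (p i / (1 / (N : ℝ)))

/-- Hoel's determinism coefficient of an N×N TPM. -/
noncomputable def determinism {N : ℕ} (T : Fin N → Fin N → ℝ) : ℝ :=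
  (1 / (N : ℝ)) * ∑ i, klU (T i) / Real.logb 2 N

/-- Hoel's degeneracy coefficient of an N×N TPM. -/
noncomputable def degeneracy {N : ℕ} (T : Fin N → Fin N → ℝ) : ℝ :=
  klU (fun j => (∑ i, T i j) / (N : ℝ)) / Real.logb 2 N

/-- Effective Information of an N×N TPM. -/
noncomputable def EI {N : ℕ} (T : Fin N → Fin N → ℝ) : ℝ :=
  Real.logb 2 N * (determinism T - degeneracy T)

/-- The four-state deterministic AND model: states 00, 01, 10 map to 00; 11 maps to 11. -/
noncomputable def andTPM : Fin 4 → Fin 4 → ℝ := fun i j =>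
  if i = 3 then (if j = 3 then 1 else 0) else (if j = 0 then 1 else 0)

/-- The coarse-grained two-state model: the 2×2 identity TPM. -/
noncomputable def idTPM2 : Fin 2 → Fin 2 → ℝ := fun i j => if i = j then 1 else 0


private lemma lb4' : Real.logb 2 4 = 2 := by
  rw [show (4:ℝ) = 2^(2:ℕ) by norm_num, Real.logb_pow, Real.logb_self_eq_one (by norm_num)]
  norm_num

private lemma lb2' : Real.logb 2 2 = 1 := Real.logb_self_eq_one (by norm_num)

private lemma lb3_gt' : 4/3 < Real.logb 2 3 := by
  have h16 : Real.logb 2 16 = 4 := by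
    rw [show (16:ℝ) = 2^(4:ℕ) by norm_num, Real.logb_pow, Real.logb_self_eq_one (by norm_num)]
    norm_num
  have h27 : Real.logb 2 27 = 3 * Real.logb 2 3 := by
    rw [show (27:ℝ) = 3^(3:ℕ) by norm_num, Real.logb_pow]; norm_num
  have h := Real.logb_lt_logb (b := 2) (by norm_num) (show (0:ℝ) < 16 by norm_num) (show (16:ℝ) < 27 by norm_num)
  rw [h16, h27] at h
  linarith

private lemma andEI' : EI andTPM = 2 - (3/4) * Real.logb 2 3 := by
  simp only [EI, determinism, degeneracy, klU, andTPM, Fin.sum_univ_four]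
  norm_num [lb4', show (0:Fin 4) ≠ 3 from by decide, show (1:Fin 4) ≠ 3 from by decide,
    show (2:Fin 4) ≠ 3 from by decide, show (2:Fin 4) ≠ 0 from by decide,
    show (3:Fin 4) ≠ 0 from by decide, show (1:Fin 4) ≠ 0 from by decide]
  ring

/-- Hoel's canonical causal-emergence example: the microscopic AND model has
EI = 2 − (3/4)·log₂ 3 < 1, while the macroscopic identity model has EI = 1 bit. -/
theorem and_model_causal_emergence :
    EI andTPM = 2 - (3/4) * Real.logb 2 3 ∧
    EI andTPM < 1 ∧
    EI idTPM2 = 1 := by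
  refine ⟨andEI', ?_, ?_⟩
  · rw [andEI']; have := lb3_gt'; linarith
  · simp only [EI, determinism, degeneracy, klU, idTPM2, Fin.sum_univ_two]
    norm_num [lb2']
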